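/- Let $0 < \alpha \le 1$, $\beta \ge 1$, and let $w \in A_1$. Then for every $f \in L^2_w(\mathbb{R}^n)$, the varying-aperture intrinsic square function satisfies $\|S_{\alpha,\beta}(f)\|_{L^2_w}^2 \le C \beta^n \|S_\alpha(f)\|_{L^2_w}^2$, where $C$ depends only on $n$ and the $A_1$ constant of $w$. -/

import Mathlib

open MeasureTheory Set Metric ENNReal

noncomputable section

/-- The axis-parallel cube centered at `x0` with side length `r`. -/
def cube (n : ℕ) (x0 : EuclideanSpace ℝ (Fin n)) (r : ℝ) : Set (EuclideanSpace ℝ (Fin n)) :=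
  {x | ∀ i, |x i - x0 i| ≤ r / 2}

/-- The weighted measure `w(E) = ∫_E w`. -/
def wm (n : ℕ) (w : EuclideanSpace ℝ (Fin n) → ℝ) (s : Set (EuclideanSpace ℝ (Fin n))) : ℝ≥0∞ :=
  ∫⁻ x in s, ENNReal.ofReal (w x)

/-- The intrinsic Hölder class 𝒞_α. -/
def holderClass (n : ℕ) (α : ℝ) : Set (EuclideanSpace ℝ (Fin n) → ℝ) :=
  {φ | Function.support φ ⊆ closedBall 0 1 ∧ (∫ x, φ x = 0) ∧
    ∀ x x', |φ x - φ x'| ≤ ‖x - x'‖ ^ α}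

/-- `f * φ_t (x)` where `φ_t(x) = t^{-n} φ(x/t)`. -/
def convDil (n : ℕ) (f φ : EuclideanSpace ℝ (Fin n) → ℝ) (t : ℝ) (x : EuclideanSpace ℝ (Fin n)) : ℝ :=
  ∫ y, f y * ((t ^ n)⁻¹ * φ (t⁻¹ • (x - y)))

/-- `A_α(f)(y,t) = sup_{φ ∈ 𝒞_α} |f * φ_t(y)|`. -/
def intA (n : ℕ) (α : ℝ) (f : EuclideanSpace ℝ (Fin n) → ℝ) (y : EuclideanSpace ℝ (Fin n)) (t : ℝ) : ℝ≥0∞ :=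
  ⨆ φ ∈ holderClass n α, ENNReal.ofReal |convDil n f φ t y|

/-- The intrinsic Littlewood–Paley g-function. -/
def gFun (n : ℕ) (α : ℝ) (f : EuclideanSpace ℝ (Fin n) → ℝ) (x : EuclideanSpace ℝ (Fin n)) : ℝ≥0∞ :=
  (∫⁻ t in Ioi (0 : ℝ), (intA n α f x t) ^ 2 * (ENNReal.ofReal t)⁻¹) ^ (1/2 : ℝ)

/-- The varying-aperture intrinsic square function `S_{α,β}`. -/
def sFun (n : ℕ) (α β : ℝ) (f : EuclideanSpace ℝ (Fin n) → ℝ) (x : EuclideanSpace ℝ (Fin n)) : ℝ≥0∞ :=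
  (∫⁻ t in Ioi (0 : ℝ), ∫⁻ y in ball x (β * t),
      (intA n α f y t) ^ 2 * (ENNReal.ofReal (t ^ (n + 1)))⁻¹) ^ (1/2 : ℝ)

/-- The intrinsic `g^*_λ` function. -/
def gStar (n : ℕ) (α lam : ℝ) (f : EuclideanSpace ℝ (Fin n) → ℝ) (x : EuclideanSpace ℝ (Fin n)) : ℝ≥0∞ :=
  (∫⁻ t in Ioi (0 : ℝ), ∫⁻ y,
      (ENNReal.ofReal (t / (t + ‖x - y‖))) ^ (lam * n) *
        (intA n α f y t) ^ 2 * (ENNReal.ofReal (t ^ (n + 1)))⁻¹) ^ (1/2 : ℝ)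

/-- The `A_1` condition with constant `A`. -/
def isA1 (n : ℕ) (w : EuclideanSpace ℝ (Fin n) → ℝ) (A : ℝ) : Prop :=
  ∀ (x0 : EuclideanSpace ℝ (Fin n)) (r : ℝ), 0 < r →
    (∫ x in cube n x0 r, w x) ≤ A * r ^ n * essInf w (volume.restrict (cube n x0 r))

/-- The `A_q` condition, `q > 1`, with constant `A`. -/
def isAq (n : ℕ) (w : EuclideanSpace ℝ (Fin n) → ℝ) (q A : ℝ) : Prop :=
  ∀ (x0 : EuclideanSpace ℝ (Fin n)) (r : ℝ), 0 < r →
    ((r ^ n)⁻¹ * ∫ x in cube n x0 r, w x) *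
      ((r ^ n)⁻¹ * ∫ x in cube n x0 r, (w x) ^ (-(1 / (q - 1)) : ℝ)) ^ (q - 1) ≤ A

end

noncomputable section Aux

open MeasureTheory Set Metric ENNReal Filter Function

variable {n : ℕ}

local notation "ℝn" => EuclideanSpace ℝ (Fin n)

lemma enn_sq_half (X : ℝ≥0∞) : (X ^ (1/2 : ℝ)) ^ (2 : ℕ) = X := by
  rw [← ENNReal.rpow_natCast (X ^ (1/2 : ℝ)) 2, ← ENNReal.rpow_mul]
  norm_num

lemma coord_abs_le_dist (x y : ℝn) (i : Fin n) : |x i - y i| ≤ dist x y := by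
  rw [EuclideanSpace.dist_eq]
  have h1 : |x i - y i| = Real.sqrt (dist (x i) (y i) ^ 2) := by
    rw [Real.sqrt_sq_eq_abs, Real.dist_eq, abs_abs]
  rw [h1]
  exact Real.sqrt_le_sqrt (Finset.single_le_sum (f := fun j => dist (x j) (y j) ^ 2) (fun j _ => sq_nonneg _) (Finset.mem_univ i))

lemma ball_subset_cube {y : ℝn} {s r : ℝ} (h : s ≤ r / 2) :
    ball y s ⊆ cube n y r := fun x hx i =>
  le_trans (le_of_lt (lt_of_le_of_lt (coord_abs_le_dist x y i) (mem_ball.mp hx))) h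

lemma cube_subset_closedBall (hn : 1 ≤ n) {y : ℝn} {r : ℝ} (hr : 0 ≤ r) :
    cube n y r ⊆ closedBall y (n * r) := by
  intro x hx
  rw [mem_closedBall, EuclideanSpace.dist_eq]
  have h1n : (1 : ℝ) ≤ n := by exact_mod_cast hn
  have hb : ∑ i, dist (x i) (y i) ^ 2 ≤ (n * r) ^ 2 := by
    calc ∑ i, dist (x i) (y i) ^ 2 ≤ ∑ _i : Fin n, (r / 2) ^ 2 := by
          refine Finset.sum_le_sum fun i _ => ?_
          have h := hx i
          rw [Real.dist_eq]
          nlinarith [abs_nonneg (x i - y i), hx i]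
      _ = n * (r / 2) ^ 2 := by simp [Finset.sum_const, Finset.card_univ]
      _ ≤ (n * r) ^ 2 := by nlinarith
  calc Real.sqrt (∑ i, dist (x i) (y i) ^ 2) ≤ Real.sqrt ((n * r) ^ 2) := Real.sqrt_le_sqrt hb
    _ = n * r := Real.sqrt_sq (by positivity)

lemma cube_measurableSet (y : ℝn) (r : ℝ) : MeasurableSet (cube n y r) := by
  have h : cube n y r = ⋂ i, {x : ℝn | |x i - y i| ≤ r / 2} := by
    ext x; simp [cube, mem_iInter]
  rw [h]
  refine MeasurableSet.iInter fun i => ?_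
  have hc : Continuous fun x : ℝn => |x i - y i| :=
    (((EuclideanSpace.proj i).continuous).sub continuous_const).abs
  exact (isClosed_le hc continuous_const).measurableSet

lemma cube_integrableOn (hn : 1 ≤ n) {w : ℝn → ℝ} (hloc : LocallyIntegrable w volume)
    (y : ℝn) {r : ℝ} (hr : 0 < r) : IntegrableOn w (cube n y r) volume :=
  ((hloc.integrableOn_isCompact (isCompact_closedBall y (n * r)))).mono_set
    (cube_subset_closedBall hn hr.le)

lemma cube_volume_pos (y : ℝn) {r : ℝ} (hr : 0 < r) : volume (cube n y r) ≠ 0 := by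
  intro h
  have h2 := measure_ball_pos volume y (show (0:ℝ) < r / 2 by linarith)
  exact absurd (measure_mono_null (ball_subset_cube le_rfl) h) h2.ne'

lemma cube_volume_lt_top (hn : 1 ≤ n) (y : ℝn) {r : ℝ} (hr : 0 ≤ r) :
    volume (cube n y r) < ∞ :=
  lt_of_le_of_lt (measure_mono (cube_subset_closedBall hn hr)) measure_closedBall_lt_top

end Aux

noncomputable section Aux2

open MeasureTheory Set Metric ENNReal Filter Function

variable {n : ℕ}

local notation "ℝn" => EuclideanSpace ℝ (Fin n)

lemma holder_abs_le (hn : 1 ≤ n) {α : ℝ} (hα0 : 0 < α) (hα1 : α ≤ 1)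
    {φ : ℝn → ℝ} (hφ : φ ∈ holderClass n α) (x : ℝn) : |φ x| ≤ 3 := by
  obtain ⟨hsupp, -, hH⟩ := hφ
  by_cases hx : ‖x‖ ≤ 1
  · set u : ℝn := EuclideanSpace.single ⟨0, hn⟩ (3:ℝ) with hu_def
    have hu : ‖u‖ = 3 := by
      rw [hu_def, EuclideanSpace.norm_single]; norm_num
    have hx' : φ (x + u) = 0 := by
      by_contra h
      have hmem := hsupp (Function.mem_support.mpr h)
      rw [mem_closedBall_zero_iff] at hmem
      have : (2:ℝ) ≤ ‖x + u‖ := by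
        have := norm_add_le (x + u) (-x)
        simp only [add_neg_cancel_comm, norm_neg] at this
        -- ‖u‖ ≤ ‖x+u‖ + ‖x‖
        linarith [hu ▸ this]
      linarith
    calc |φ x| = |φ x - φ (x + u)| := by rw [hx', sub_zero]
      _ ≤ ‖x - (x + u)‖ ^ α := hH x (x + u)
      _ = 3 ^ α := by
          have : x - (x + u) = -u := by abel
          rw [this, norm_neg, hu]
      _ ≤ 3 ^ (1:ℝ) := Real.rpow_le_rpow_of_exponent_le (by norm_num) hα1
      _ = 3 := Real.rpow_one 3
  · have h0 : φ x = 0 := by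
      by_contra h
      exact hx (mem_closedBall_zero_iff.mp (hsupp (Function.mem_support.mpr h)))
    simp [h0]

lemma holder_continuous {α : ℝ} (hα0 : 0 < α) {φ : ℝn → ℝ}
    (hH : ∀ x x', |φ x - φ x'| ≤ ‖x - x'‖ ^ α) : Continuous φ := by
  rw [continuous_iff_continuousAt]
  intro x
  rw [ContinuousAt, tendsto_iff_dist_tendsto_zero]
  have hb : Tendsto (fun y : ℝn => ‖y - x‖ ^ α) (nhds x) (nhds 0) := by
    have h1 : Tendsto (fun y : ℝn => ‖y - x‖) (nhds x) (nhds 0) := by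
      have := (continuous_id.sub (continuous_const (y := x))).norm.tendsto x
      simpa using this
    have h2 : ContinuousAt (fun s : ℝ => s ^ α) 0 :=
      Real.continuousAt_rpow_const 0 α (Or.inr hα0.le)
    have h3 := h2.tendsto.comp h1
    simpa [Function.comp_def, Real.zero_rpow hα0.ne'] using h3
  refine squeeze_zero (fun y => dist_nonneg) (fun y => ?_) hb
  rw [Real.dist_eq]
  exact hH y x

lemma convDil_congr {f g : ℝn → ℝ} (h : f =ᵐ[volume] g) (φ : ℝn → ℝ) (t : ℝ) (x : ℝn) :
    convDil n f φ t x = convDil n g φ t x :=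
  integral_congr_ae (h.mono fun y hy => by simp only []; rw [hy])

lemma intA_congr {f g : ℝn → ℝ} (h : f =ᵐ[volume] g) (α : ℝ) (y : ℝn) (t : ℝ) :
    intA n α f y t = intA n α g y t :=
  iSup_congr fun φ => iSup_congr fun _ => by rw [convDil_congr h]

lemma essInf_nonneg_of {w : ℝn → ℝ} (hw : ∀ x, 0 ≤ w x) {s : Set ℝn}
    (hs0 : volume s ≠ 0) (hst : volume s < ∞) (hint : IntegrableOn w s volume) :
    0 ≤ essInf w (volume.restrict s) := by
  rw [essInf_eq_sSup]
  have hSb : BddAbove {a : ℝ | volume.restrict s {x | w x < a} = 0} := by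
    refine ⟨(∫ x in s, w x) / (volume s).toReal, fun a ha => ?_⟩
    have hae : ∀ᵐ x ∂volume.restrict s, a ≤ w x := by
      rw [ae_iff]
      simpa only [not_le, mem_setOf_eq] using ha
    have hVpos : 0 < (volume s).toReal := ENNReal.toReal_pos hs0 hst.ne
    rw [le_div_iff₀ hVpos]
    calc a * (volume s).toReal = ∫ _x in s, a ∂volume := by rw [setIntegral_const, smul_eq_mul, measureReal_def]; ring
      _ ≤ ∫ x in s, w x ∂volume := by
          refine integral_mono_ae (integrableOn_const hst.ne) hint hae
  refine le_csSup hSb ?_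
  have he : {x | w x < 0} = (∅ : Set ℝn) := by
    ext x; simp [not_lt.mpr (hw x)]
  simp [he]

end Aux2

noncomputable section Aux3

open MeasureTheory Set Metric ENNReal Filter Function

variable {n : ℕ}

local notation "ℝn" => EuclideanSpace ℝ (Fin n)

lemma convDil_continuousAt (hn : 1 ≤ n) {α : ℝ} (hα0 : 0 < α) (hα1 : α ≤ 1)
    {g : ℝn → ℝ} (hg : Measurable g)
    (hgi : ∀ (c : ℝn) (ρ : ℝ), IntegrableOn g (closedBall c ρ) volume)
    {φ : ℝn → ℝ} (hφ : φ ∈ holderClass n α)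
    {y0 : ℝn} {t0 : ℝ} (ht0 : 0 < t0) :
    ContinuousAt (fun p : ℝn × ℝ => convDil n g φ p.2 p.1) (y0, t0) := by
  have hφc : Continuous φ := holder_continuous hα0 hφ.2.2
  have hφb : ∀ x, |φ x| ≤ 3 := holder_abs_le hn hα0 hα1 hφ
  simp only [convDil]
  refine continuousAt_of_dominated (bound := fun z =>
    (closedBall y0 (2 * t0 + 1)).indicator (fun z => 3 * ((t0 / 2) ^ n)⁻¹ * ‖g z‖) z)
    ?_ ?_ ?_ ?_
  · filter_upwards with p
    refine (hg.mul ?_).aestronglyMeasurable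
    exact (measurable_const.mul ((hφc.comp
      ((continuous_const.sub continuous_id).const_smul p.2⁻¹)).measurable))
  · have hmem : (ball y0 1 ×ˢ Ioo (t0 / 2) (2 * t0)) ∈ nhds (y0, t0) :=
      prod_mem_nhds (ball_mem_nhds _ one_pos) (Ioo_mem_nhds (by linarith) (by linarith))
    filter_upwards [hmem] with p hp
    obtain ⟨hp1, hp2⟩ := hp
    have ht : 0 < p.2 := lt_trans (by linarith) hp2.1
    refine ae_of_all _ fun z => ?_
    by_cases hz : z ∈ closedBall y0 (2 * t0 + 1)
    · rw [indicator_of_mem hz]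
      have h1 : ‖g z * ((p.2 ^ n)⁻¹ * φ (p.2⁻¹ • (p.1 - z)))‖
          = ‖g z‖ * ((p.2 ^ n)⁻¹ * |φ (p.2⁻¹ • (p.1 - z))|) := by
        rw [norm_mul, Real.norm_eq_abs (((p.2 ^ n))⁻¹ * _), abs_mul,
          abs_of_pos (inv_pos.mpr (pow_pos ht n))]
      rw [h1]
      have h2 : (p.2 ^ n)⁻¹ ≤ ((t0 / 2) ^ n)⁻¹ := by
        apply inv_anti₀ (pow_pos (by linarith) n)
        exact pow_le_pow_left₀ (by linarith) hp2.1.le n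
      calc ‖g z‖ * ((p.2 ^ n)⁻¹ * |φ (p.2⁻¹ • (p.1 - z))|)
          ≤ ‖g z‖ * (((t0 / 2) ^ n)⁻¹ * 3) := by
            refine mul_le_mul_of_nonneg_left ?_ (norm_nonneg _)
            exact mul_le_mul h2 (hφb _) (abs_nonneg _) (by positivity)
        _ = 3 * ((t0 / 2) ^ n)⁻¹ * ‖g z‖ := by ring
    · rw [indicator_of_notMem hz]
      have hφ0 : φ (p.2⁻¹ • (p.1 - z)) = 0 := by
        by_contra h
        have hmem2 := hφ.1 (Function.mem_support.mpr h)
        rw [mem_closedBall_zero_iff, norm_smul, Real.norm_eq_abs,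
          abs_of_pos (inv_pos.mpr ht)] at hmem2
        have h3 : ‖p.1 - z‖ ≤ p.2 := by
          have := mul_le_mul_of_nonneg_left hmem2 ht.le
          rw [mul_one, ← mul_assoc, mul_inv_cancel₀ ht.ne', one_mul] at this
          exact this
        apply hz
        rw [mem_closedBall]
        calc dist z y0 ≤ dist z p.1 + dist p.1 y0 := dist_triangle z p.1 y0
          _ ≤ p.2 + 1 := by
              refine add_le_add ?_ (le_of_lt (mem_ball.mp hp1))
              rw [dist_comm, dist_eq_norm]
              exact h3
          _ ≤ 2 * t0 + 1 := by linarith [hp2.2]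
      simp [hφ0]
  · exact IntegrableOn.integrable_indicator
      ((hgi y0 (2 * t0 + 1)).norm.const_mul (3 * ((t0 / 2) ^ n)⁻¹)) measurableSet_closedBall
  · refine ae_of_all _ fun z => ?_
    have h1 : ContinuousAt (fun p : ℝn × ℝ => (p.2 ^ n : ℝ)⁻¹) (y0, t0) :=
      ((continuous_snd.pow n).continuousAt).inv₀ (pow_ne_zero _ ht0.ne')
    have h2 : ContinuousAt (fun p : ℝn × ℝ => φ (p.2⁻¹ • (p.1 - z))) (y0, t0) := by
      refine hφc.continuousAt.comp ?_
      exact (continuous_snd.continuousAt.inv₀ ht0.ne').smul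
        ((continuous_fst.sub continuous_const).continuousAt)
    exact continuousAt_const.mul (h1.mul h2)

lemma measurable_bigF (hn : 1 ≤ n) {α : ℝ} (hα0 : 0 < α) (hα1 : α ≤ 1)
    {g : ℝn → ℝ} (hg : Measurable g)
    (hgi : ∀ (c : ℝn) (ρ : ℝ), IntegrableOn g (closedBall c ρ) volume) :
    Measurable (fun p : ℝn × ℝ => if 0 < p.2 then intA n α g p.1 p.2 else 0) := by
  have heq : (fun p : ℝn × ℝ => if 0 < p.2 then intA n α g p.1 p.2 else 0)
      = fun p => ⨆ φ ∈ holderClass n α,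
          (if 0 < p.2 then ENNReal.ofReal |convDil n g φ p.2 p.1| else 0) := by
    funext p
    by_cases hp : 0 < p.2
    · simp only [if_pos hp, intA]
    · simp only [if_neg hp]
      exact (le_antisymm (iSup₂_le fun _ _ => le_rfl) zero_le).symm
  rw [heq]
  refine LowerSemicontinuous.measurable ?_
  refine lowerSemicontinuous_biSup fun φ hφ => ?_
  intro p
  by_cases hp : 0 < p.2
  · have hc : ContinuousAt (fun q : ℝn × ℝ => ENNReal.ofReal |convDil n g φ q.2 q.1|) p := by
      have h0 : ContinuousAt (fun q : ℝn × ℝ => convDil n g φ q.2 q.1) p := by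
        have := convDil_continuousAt hn hα0 hα1 hg hgi hφ (y0 := p.1) (t0 := p.2) hp
        simpa using this
      exact ENNReal.continuous_ofReal.continuousAt.comp h0.abs
    have hev : (fun q : ℝn × ℝ => ENNReal.ofReal |convDil n g φ q.2 q.1|) =ᶠ[nhds p]
        (fun q => if 0 < q.2 then ENNReal.ofReal |convDil n g φ q.2 q.1| else 0) := by
      filter_upwards [IsOpen.mem_nhds (isOpen_lt continuous_const continuous_snd) hp] with q hq
      rw [if_pos hq]
    exact (hc.congr hev).lowerSemicontinuousAt
  · intro c hc
    simp only [if_neg hp] at hc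
    exact absurd hc (by simp)

end Aux3

noncomputable section Aux4

open MeasureTheory Set Metric ENNReal Filter Function

variable {n : ℕ}

local notation "ℝn" => EuclideanSpace ℝ (Fin n)

lemma key_swap {Φ : ℝn × ℝ → ℝ≥0∞} (hΦ : Measurable Φ) {w' : ℝn → ℝ}
    (hw' : Measurable w') (b : ℝ) :
    ∫⁻ x, (∫⁻ t in Ioi (0:ℝ), ∫⁻ y in ball x (b * t), Φ (y, t)) * ENNReal.ofReal (w' x)
      = ∫⁻ t in Ioi (0:ℝ), ∫⁻ y, Φ (y, t) * ∫⁻ x in ball y (b * t), ENNReal.ofReal (w' x) := by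
  have hv : Measurable fun x : ℝn => ENNReal.ofReal (w' x) := ENNReal.measurable_ofReal.comp hw'
  have hvt : ∀ x : ℝn, ENNReal.ofReal (w' x) ≠ ∞ := fun x => ofReal_ne_top
  -- measurability of the big indicator kernel on (ℝn × ℝ) × ℝn
  have hm1 : Measurable fun q : (ℝn × ℝ) × ℝn =>
      (ball q.1.1 (b * q.1.2)).indicator (fun y => Φ (y, q.1.2)) q.2 := by
    have hset : MeasurableSet {q : (ℝn × ℝ) × ℝn | dist q.2 q.1.1 < b * q.1.2} := by
      refine measurableSet_lt ?_ ?_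
      · exact (continuous_dist.comp (continuous_snd.prodMk continuous_fst.fst)).measurable
      · exact (continuous_const.mul continuous_fst.snd).measurable
    have heq : (fun q : (ℝn × ℝ) × ℝn =>
        (ball q.1.1 (b * q.1.2)).indicator (fun y => Φ (y, q.1.2)) q.2)
        = {q : (ℝn × ℝ) × ℝn | dist q.2 q.1.1 < b * q.1.2}.indicator
            (fun q => Φ (q.2, q.1.2)) := by
      funext q
      by_cases h : dist q.2 q.1.1 < b * q.1.2
      · rw [indicator_of_mem (mem_ball.mpr h), indicator_of_mem
          (show q ∈ {q : (ℝn × ℝ) × ℝn | dist q.2 q.1.1 < b * q.1.2} from h)]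
      · rw [indicator_of_notMem (fun hc => h (mem_ball.mp hc)), indicator_of_notMem
          (show q ∉ {q : (ℝn × ℝ) × ℝn | dist q.2 q.1.1 < b * q.1.2} from h)]
    rw [heq]
    exact (hΦ.comp (measurable_snd.prodMk measurable_fst.snd)).indicator hset
  have hΨm : Measurable fun p : ℝn × ℝ =>
      ∫⁻ y, (ball p.1 (b * p.2)).indicator (fun y => Φ (y, p.2)) y :=
    hm1.lintegral_prod_right'
  calc ∫⁻ x, (∫⁻ t in Ioi (0:ℝ), ∫⁻ y in ball x (b * t), Φ (y, t)) * ENNReal.ofReal (w' x)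
      = ∫⁻ x, ∫⁻ t in Ioi (0:ℝ),
          (∫⁻ y, (ball x (b * t)).indicator (fun y => Φ (y, t)) y) * ENNReal.ofReal (w' x) := by
        refine lintegral_congr fun x => ?_
        rw [← lintegral_mul_const' _ _ (hvt x)]
        refine lintegral_congr fun t => ?_
        rw [lintegral_indicator measurableSet_ball]
    _ = ∫⁻ t in Ioi (0:ℝ), ∫⁻ x,
          (∫⁻ y, (ball x (b * t)).indicator (fun y => Φ (y, t)) y) * ENNReal.ofReal (w' x) := by
        exact lintegral_lintegral_swap ((hΨm.mul (hv.comp measurable_fst)).aemeasurable)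
    _ = ∫⁻ t in Ioi (0:ℝ), ∫⁻ y, Φ (y, t) * ∫⁻ x in ball y (b * t), ENNReal.ofReal (w' x) := by
        refine lintegral_congr fun t => ?_
        have hm2 : Measurable fun q : ℝn × ℝn =>
            (ball q.1 (b * t)).indicator (fun y => Φ (y, t)) q.2 * ENNReal.ofReal (w' q.1) := by
          have hset : MeasurableSet {q : ℝn × ℝn | dist q.2 q.1 < b * t} :=
            measurableSet_lt (continuous_dist.comp
              (continuous_snd.prodMk continuous_fst) |>.measurable) measurable_const
          have heq : (fun q : ℝn × ℝn => (ball q.1 (b * t)).indicator (fun y => Φ (y, t)) q.2)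
              = {q : ℝn × ℝn | dist q.2 q.1 < b * t}.indicator (fun q => Φ (q.2, t)) := by
            funext q
            by_cases h : dist q.2 q.1 < b * t
            · rw [indicator_of_mem (mem_ball.mpr h), indicator_of_mem
                (show q ∈ {q : ℝn × ℝn | dist q.2 q.1 < b * t} from h)]
            · rw [indicator_of_notMem (fun hc => h (mem_ball.mp hc)), indicator_of_notMem
                (show q ∉ {q : ℝn × ℝn | dist q.2 q.1 < b * t} from h)]
          refine Measurable.mul ?_ (hv.comp measurable_fst)
          rw [heq]
          exact (hΦ.comp (measurable_snd.prodMk measurable_const)).indicator hset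
        calc ∫⁻ x, (∫⁻ y, (ball x (b * t)).indicator (fun y => Φ (y, t)) y)
                * ENNReal.ofReal (w' x)
            = ∫⁻ x, ∫⁻ y, (ball x (b * t)).indicator (fun y => Φ (y, t)) y
                * ENNReal.ofReal (w' x) := by
              exact lintegral_congr fun x => (lintegral_mul_const' _ _ (hvt x)).symm
          _ = ∫⁻ y, ∫⁻ x, (ball x (b * t)).indicator (fun y => Φ (y, t)) y
                * ENNReal.ofReal (w' x) := lintegral_lintegral_swap hm2.aemeasurable
          _ = ∫⁻ y, Φ (y, t) * ∫⁻ x in ball y (b * t), ENNReal.ofReal (w' x) := by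
              refine lintegral_congr fun y => ?_
              have hpt : ∀ x : ℝn, (ball x (b * t)).indicator (fun y => Φ (y, t)) y
                  * ENNReal.ofReal (w' x)
                  = Φ (y, t) * (ball y (b * t)).indicator (fun x => ENNReal.ofReal (w' x)) x := by
                intro x
                by_cases h : dist y x < b * t
                · rw [indicator_of_mem (mem_ball.mpr h),
                    indicator_of_mem (mem_ball.mpr (by rwa [dist_comm]))]
                · rw [indicator_of_notMem (fun hc => h (mem_ball.mp hc)),
                    indicator_of_notMem (fun hc => h (by rw [dist_comm]; exact mem_ball.mp hc))]
                  simp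
              rw [lintegral_congr hpt,
                lintegral_const_mul _ (hv.indicator measurableSet_ball),
                lintegral_indicator measurableSet_ball]

lemma doubling (hn : 1 ≤ n) {w : ℝn → ℝ} (hw : ∀ x, 0 ≤ w x)
    (hloc : LocallyIntegrable w volume) {A : ℝ} (hA : isA1 n w A) (hA1 : 1 ≤ A)
    {b t : ℝ} (hb : 1 ≤ b) (ht : 0 < t) (y : ℝn) :
    (∫⁻ x in ball y (b * t), ENNReal.ofReal (w x))
      ≤ ENNReal.ofReal ((A * 2 ^ n / (volume (ball (0:ℝn) 1)).toReal) * b ^ n)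
        * ∫⁻ x in ball y t, ENNReal.ofReal (w x) := by
  haveI : Nontrivial (EuclideanSpace ℝ (Fin n)) := by
    refine ⟨⟨EuclideanSpace.single ⟨0, hn⟩ 1, 0, fun h => ?_⟩⟩
    have := congrArg (fun v => v ⟨0, hn⟩) h
    simp [EuclideanSpace.single_apply] at this
  have hbt : 0 < b * t := by nlinarith
  set r := 2 * (b * t) with hr
  have hrpos : 0 < r := by positivity
  set Q := cube n y r with hQ
  have hballQ : ball y (b * t) ⊆ Q := ball_subset_cube (by rw [hr]; ring_nf; exact le_rfl)
  have hball1Q : ball y t ⊆ Q := ball_subset_cube (by rw [hr]; nlinarith)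
  have hQint : IntegrableOn w Q volume := cube_integrableOn hn hloc y hrpos
  have hQvol0 : volume Q ≠ 0 := cube_volume_pos y hrpos
  have hQvolt : volume Q < ∞ := cube_volume_lt_top hn y hrpos.le
  set m := essInf w (volume.restrict Q) with hm
  have hm0 : 0 ≤ m := essInf_nonneg_of hw hQvol0 hQvolt hQint
  have hwm : ∀ᵐ x ∂volume.restrict Q, m ≤ w x :=
    ae_essInf_le (isBoundedUnder_of ⟨0, fun x => hw x⟩)
  set V := volume (ball (0:ℝn) 1) with hV
  have hV0 : V ≠ 0 := (measure_ball_pos volume 0 one_pos).ne'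
  have hVtop : V ≠ ∞ := measure_ball_lt_top.ne
  have hvR : 0 < V.toReal := ENNReal.toReal_pos hV0 hVtop
  have h2 : (∫⁻ x in ball y (b * t), ENNReal.ofReal (w x))
      ≤ ENNReal.ofReal (A * r ^ n) * ENNReal.ofReal m := by
    calc (∫⁻ x in ball y (b * t), ENNReal.ofReal (w x))
        ≤ ∫⁻ x in Q, ENNReal.ofReal (w x) := lintegral_mono_set hballQ
      _ = ENNReal.ofReal (∫ x in Q, w x) :=
          (ofReal_integral_eq_lintegral_ofReal hQint (ae_of_all _ hw)).symm
      _ ≤ ENNReal.ofReal (A * r ^ n * m) := ofReal_le_ofReal (hA y r hrpos)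
      _ = ENNReal.ofReal (A * r ^ n) * ENNReal.ofReal m :=
          ofReal_mul (mul_nonneg (by linarith) (pow_nonneg hrpos.le n))
  have h3 : ENNReal.ofReal m * (ENNReal.ofReal (t ^ n) * V)
      ≤ ∫⁻ x in ball y t, ENNReal.ofReal (w x) := by
    have hwm' : ∀ᵐ x ∂volume.restrict (ball y t),
        ENNReal.ofReal m ≤ ENNReal.ofReal (w x) := by
      have hle : volume.restrict (ball y t) ≤ volume.restrict Q :=
        Measure.restrict_mono hball1Q le_rfl
      exact (hwm.filter_mono (ae_mono hle)).mono fun x hx => ofReal_le_ofReal hx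
    calc ENNReal.ofReal m * (ENNReal.ofReal (t ^ n) * V)
        = ENNReal.ofReal m * volume (ball y t) := by
          rw [Measure.addHaar_ball volume y ht.le, finrank_euclideanSpace_fin, hV]
      _ = ∫⁻ _x in ball y t, ENNReal.ofReal m := (setLIntegral_const _ _).symm
      _ ≤ ∫⁻ x in ball y t, ENNReal.ofReal (w x) := lintegral_mono_ae hwm'
  have hD0 : ENNReal.ofReal (t ^ n) * V ≠ 0 := by
    refine mul_ne_zero ?_ hV0
    rw [ne_eq, ofReal_eq_zero, not_le]
    positivity
  have hDt : ENNReal.ofReal (t ^ n) * V ≠ ∞ := ENNReal.mul_ne_top ofReal_ne_top hVtop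
  rw [← ENNReal.mul_le_mul_iff_left hD0 hDt]
  have hA0 : (0:ℝ) ≤ A := by linarith
  have hc0 : (0:ℝ) ≤ A * 2 ^ n / V.toReal * b ^ n :=
    mul_nonneg (div_nonneg (mul_nonneg hA0 (by positivity)) hvR.le) (by positivity)
  have hconst : ENNReal.ofReal (A * 2 ^ n / V.toReal * b ^ n)
      * (ENNReal.ofReal (t ^ n) * ENNReal.ofReal V.toReal) = ENNReal.ofReal (A * r ^ n) := by
    rw [← ofReal_mul (pow_nonneg ht.le n), ← ofReal_mul hc0]
    congr 1
    rw [hr]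
    field_simp
    ring
  calc (∫⁻ x in ball y (b * t), ENNReal.ofReal (w x)) * (ENNReal.ofReal (t ^ n) * V)
      ≤ (ENNReal.ofReal (A * r ^ n) * ENNReal.ofReal m) * (ENNReal.ofReal (t ^ n) * V) :=
        mul_le_mul_left h2 _
    _ = ENNReal.ofReal (A * r ^ n) * (ENNReal.ofReal m * (ENNReal.ofReal (t ^ n) * V)) := by
        ring
    _ ≤ ENNReal.ofReal (A * r ^ n) * ∫⁻ x in ball y t, ENNReal.ofReal (w x) :=
        mul_le_mul_right h3 _
    _ = ENNReal.ofReal (A * 2 ^ n / V.toReal * b ^ n)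
          * (∫⁻ x in ball y t, ENNReal.ofReal (w x)) * (ENNReal.ofReal (t ^ n) * V) := by
        rw [← hconst, ENNReal.ofReal_toReal hVtop]
        ring

end Aux4

/-- Aperture comparison: `‖S_{α,β} f‖²_{L²_w} ≤ C βⁿ ‖S_α f‖²_{L²_w}` for `w ∈ A₁`. -/
theorem sFun_aperture_L2 (n : ℕ) (hn : 1 ≤ n) (α : ℝ) (hα0 : 0 < α) (hα1 : α ≤ 1)
    (β : ℝ) (hβ : 1 ≤ β)
    (w : EuclideanSpace ℝ (Fin n) → ℝ) (hw : ∀ x, 0 ≤ w x)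
    (hloc : MeasureTheory.LocallyIntegrable w volume) (A : ℝ) (hA : isA1 n w A) :
    ∃ C > 0, ∀ f : EuclideanSpace ℝ (Fin n) → ℝ,
      MeasureTheory.MemLp f 2 (volume.withDensity fun x => ENNReal.ofReal (w x)) →
      (∫⁻ x, (sFun n α β f x) ^ 2 * ENNReal.ofReal (w x)) ≤
        ENNReal.ofReal (C * β ^ n) * ∫⁻ x, (sFun n α 1 f x) ^ 2 * ENNReal.ofReal (w x) := by

  classical
  set V := volume (ball (0 : EuclideanSpace ℝ (Fin n)) 1) with hV
  have hV0 : V ≠ 0 := (measure_ball_pos volume 0 one_pos).ne'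
  have hVtop : V ≠ ∞ := measure_ball_lt_top.ne
  have hvR : 0 < V.toReal := ENNReal.toReal_pos hV0 hVtop
  set A' := max A 1 with hA'def
  have hA'1 : 1 ≤ A' := le_max_right _ _
  have hA' : isA1 n w A' := by
    intro y r hr
    refine le_trans (hA y r hr) ?_
    have hm0 : 0 ≤ essInf w (volume.restrict (cube n y r)) :=
      essInf_nonneg_of hw (cube_volume_pos y hr) (cube_volume_lt_top hn y hr.le)
        (cube_integrableOn hn hloc y hr)
    exact mul_le_mul_of_nonneg_right
      (mul_le_mul_of_nonneg_right (le_max_left A 1) (pow_nonneg hr.le n)) hm0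
  refine ⟨A' * 2 ^ n / V.toReal,
    div_pos (mul_pos (lt_of_lt_of_le one_pos hA'1) (by positivity)) hvR, fun f hf => ?_⟩
  by_cases hzero : w =ᵐ[volume] 0
  · have hL : (∫⁻ x, (sFun n α β f x) ^ 2 * ENNReal.ofReal (w x)) = 0 := by
      rw [← lintegral_zero]
      refine lintegral_congr_ae ?_
      filter_upwards [hzero] with x hx
      simp [hx]
    rw [hL]
    exact zero_le
  -- w is not a.e. zero
  have hmemcube : ∀ (x : EuclideanSpace ℝ (Fin n)) (L : ℝ), 2 * ‖x‖ ≤ L → x ∈ cube n 0 L := by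
    intro x L hL i
    have h1 : |x i - (0 : EuclideanSpace ℝ (Fin n)) i| ≤ dist x 0 := coord_abs_le_dist x 0 i
    rw [dist_zero_right] at h1
    have h2 : (0 : EuclideanSpace ℝ (Fin n)) i = 0 := rfl
    rw [h2] at h1
    rw [h2]
    linarith
  have hKpos : ∃ k : ℕ, 0 < ∫ x in cube n 0 ((k : ℝ) + 1), w x := by
    by_contra hk
    push_neg at hk
    apply hzero
    have hae : ∀ k : ℕ, ∀ᵐ x, x ∈ cube n 0 ((k : ℝ) + 1) → w x = 0 := by
      intro k
      have hkpos : (0 : ℝ) < (k : ℝ) + 1 := by positivity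
      have hint := cube_integrableOn hn hloc (0 : EuclideanSpace ℝ (Fin n)) hkpos
      have h0 : ∫ x in cube n 0 ((k : ℝ) + 1), w x = 0 :=
        le_antisymm (hk k) (setIntegral_nonneg (cube_measurableSet _ _) fun x _ => hw x)
      have h1 : w =ᵐ[volume.restrict (cube n 0 ((k : ℝ) + 1))] 0 :=
        (integral_eq_zero_iff_of_nonneg (fun x => hw x) hint).mp h0
      have h1' : ∀ᵐ x ∂volume.restrict (cube n 0 ((k : ℝ) + 1)), w x = 0 :=
        h1.mono fun x hx => by simpa using hx
      exact (ae_restrict_iff' (cube_measurableSet _ _)).mp h1'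
    have h2 : ∀ᵐ x, ∀ k : ℕ, x ∈ cube n 0 ((k : ℝ) + 1) → w x = 0 := ae_all_iff.mpr hae
    filter_upwards [h2] with x hx
    obtain ⟨k, hk2⟩ := exists_nat_gt (2 * ‖x‖)
    simp only [Pi.zero_apply]
    exact hx k (hmemcube x _ (by push_cast; linarith))
  obtain ⟨k₀, hk₀⟩ := hKpos
  have hbig : ∀ L : ℝ, (k₀ : ℝ) + 1 ≤ L → 0 < essInf w (volume.restrict (cube n 0 L)) := by
    intro L hL
    have hLpos : 0 < L := lt_of_lt_of_le (by positivity) hL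
    have hsub : cube n 0 ((k₀ : ℝ) + 1) ⊆ cube n 0 L := fun x hx i => le_trans (hx i) (by linarith)
    have hint : IntegrableOn w (cube n 0 L) volume := cube_integrableOn hn hloc 0 hLpos
    have hIpos : 0 < ∫ x in cube n 0 L, w x :=
      lt_of_lt_of_le hk₀ (setIntegral_mono_set hint (ae_restrict_of_ae (ae_of_all _ hw))
        (HasSubset.Subset.eventuallyLE hsub))
    have hm0 : 0 ≤ essInf w (volume.restrict (cube n 0 L)) :=
      essInf_nonneg_of hw (cube_volume_pos 0 hLpos) (cube_volume_lt_top hn 0 hLpos.le) hint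
    rcases hm0.lt_or_eq with h | h
    · exact h
    · exfalso
      have h2 := hA 0 L hLpos
      rw [← h, mul_zero] at h2
      linarith
  have hwpos : ∀ᵐ x, 0 < w x := by
    have h1 : ∀ k : ℕ, ∀ᵐ x, x ∈ cube n 0 ((k₀ : ℝ) + 1 + k) → 0 < w x := by
      intro k
      have hL : (k₀ : ℝ) + 1 ≤ (k₀ : ℝ) + 1 + k := le_add_of_nonneg_right (Nat.cast_nonneg k)
      have hm := hbig _ hL
      have h2 : ∀ᵐ x ∂volume.restrict (cube n 0 ((k₀ : ℝ) + 1 + k)),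
          essInf w (volume.restrict (cube n 0 ((k₀ : ℝ) + 1 + k))) ≤ w x :=
        ae_essInf_le (Filter.isBoundedUnder_of ⟨0, fun x => hw x⟩)
      have h3 := (ae_restrict_iff' (cube_measurableSet _ _)).mp h2
      filter_upwards [h3] with x hx hmem
      exact lt_of_lt_of_le hm (hx hmem)
    have h2 := ae_all_iff.mpr h1
    filter_upwards [h2] with x hx
    obtain ⟨k, hk2⟩ := exists_nat_gt (2 * ‖x‖)
    refine hx k (hmemcube x _ ?_)
    push_cast
    linarith [Nat.cast_nonneg (α := ℝ) k₀]
  have hwae : AEMeasurable (fun x => ENNReal.ofReal (w x)) volume :=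
    ENNReal.measurable_ofReal.comp_aemeasurable hloc.aestronglyMeasurable.aemeasurable
  have habs : volume ≪ volume.withDensity fun x => ENNReal.ofReal (w x) := by
    refine Measure.AbsolutelyContinuous.mk fun E hE hE0 => ?_
    rw [withDensity_apply _ hE] at hE0
    have h2 : ∀ᵐ x ∂volume.restrict E, ENNReal.ofReal (w x) = 0 :=
      (lintegral_eq_zero_iff' hwae.restrict).mp hE0
    have h3 : ∀ᵐ x ∂volume.restrict E, 0 < w x := ae_restrict_of_ae hwpos
    have h4 : ∀ᵐ _x ∂volume.restrict E, False := by
      filter_upwards [h2, h3] with x hx2 hx3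
      rw [ofReal_eq_zero] at hx2
      linarith
    have h5 := ae_iff.mp h4
    simp only [not_false_eq_true, setOf_true] at h5
    rwa [Measure.restrict_apply_univ] at h5
  have hfm : AEStronglyMeasurable f volume := hf.1.mono_ac habs
  obtain ⟨g, hg_sm, hfg⟩ := hfm
  have hg : Measurable g := hg_sm.measurable
  have hcast : ∀ X : ℝ≥0∞, X ^ (2 : ℝ) = X ^ (2 : ℕ) := fun X => by
    rw [← ENNReal.rpow_natCast]; norm_num
  have hf2 : ∫⁻ x, (‖g x‖₊ : ℝ≥0∞) ^ (2 : ℕ) * ENNReal.ofReal (w x) < ∞ := by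
    have h1 := hf.2
    rw [eLpNorm_eq_lintegral_rpow_enorm_toReal (by norm_num) (by norm_num)] at h1
    simp only [ENNReal.toReal_ofNat] at h1
    have h2 := (ENNReal.rpow_lt_top_iff_of_pos (by norm_num : (0 : ℝ) < 1 / 2)).mp h1
    have hfg' : f =ᵐ[volume.withDensity fun x => ENNReal.ofReal (w x)] g :=
      hfg.filter_mono (withDensity_absolutelyContinuous _ _).ae_le
    have h3 : ∫⁻ x, (‖g x‖₊ : ℝ≥0∞) ^ (2 : ℕ)
        ∂(volume.withDensity fun x => ENNReal.ofReal (w x)) < ∞ := by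
      refine lt_of_eq_of_lt (lintegral_congr_ae ?_) h2
      filter_upwards [hfg'] with x hx
      rw [hx, hcast, enorm_eq_nnnorm]
    rw [lintegral_withDensity_eq_lintegral_mul₀ hwae
      ((hg.nnnorm.coe_nnreal_ennreal.pow_const 2).aemeasurable)] at h3
    refine lt_of_eq_of_lt (lintegral_congr fun x => ?_) h3
    simp only [Pi.mul_apply]
    exact mul_comm _ _
  have hgi : ∀ (c : EuclideanSpace ℝ (Fin n)) (ρ : ℝ),
      IntegrableOn g (closedBall c ρ) volume := by
    intro c ρ
    set L := max ((k₀ : ℝ) + 1) (2 * (‖c‖ + |ρ|) + 2) with hLdef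
    have hL1 : (k₀ : ℝ) + 1 ≤ L := le_max_left _ _
    have hsub : closedBall c ρ ⊆ cube n 0 L := by
      intro x hx
      refine hmemcube x L ?_
      have h3 := mem_closedBall.mp hx
      have h4 : ‖x‖ - ‖c‖ ≤ dist x c := by
        rw [dist_eq_norm]
        exact norm_sub_norm_le x c
      have h5 : 2 * (‖c‖ + |ρ|) + 2 ≤ L := le_max_right _ _
      have h6 : ρ ≤ |ρ| := le_abs_self ρ
      linarith
    set m' := essInf w (volume.restrict (cube n 0 L)) with hm'def
    have hm' : 0 < m' := hbig L hL1
    have hwae2 : ∀ᵐ x ∂volume.restrict (closedBall c ρ), m' ≤ w x := by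
      have h2 : ∀ᵐ x ∂volume.restrict (cube n 0 L), m' ≤ w x :=
        ae_essInf_le (Filter.isBoundedUnder_of ⟨0, fun x => hw x⟩)
      exact h2.filter_mono (ae_mono (Measure.restrict_mono hsub le_rfl))
    have hne : ENNReal.ofReal m' ≠ 0 := by
      rw [ne_eq, ofReal_eq_zero, not_le]; exact hm'
    have hb2 : ∫⁻ x in closedBall c ρ, (‖g x‖₊ : ℝ≥0∞) ^ (2 : ℕ) < ∞ := by
      have hle : ∀ᵐ x ∂volume.restrict (closedBall c ρ),
          (‖g x‖₊ : ℝ≥0∞) ^ (2 : ℕ) ≤ (ENNReal.ofReal m')⁻¹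
            * ((‖g x‖₊ : ℝ≥0∞) ^ (2 : ℕ) * ENNReal.ofReal (w x)) := by
        filter_upwards [hwae2] with x hx
        calc (‖g x‖₊ : ℝ≥0∞) ^ (2 : ℕ)
            = (ENNReal.ofReal m')⁻¹ * ((‖g x‖₊ : ℝ≥0∞) ^ (2 : ℕ) * ENNReal.ofReal m') := by
              rw [mul_comm ((‖g x‖₊ : ℝ≥0∞) ^ (2 : ℕ)), ← mul_assoc,
                ENNReal.inv_mul_cancel hne ofReal_ne_top, one_mul]
          _ ≤ _ := mul_le_mul_right (mul_le_mul_right (ofReal_le_ofReal hx) _) _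
      calc ∫⁻ x in closedBall c ρ, (‖g x‖₊ : ℝ≥0∞) ^ (2 : ℕ)
          ≤ ∫⁻ x in closedBall c ρ, (ENNReal.ofReal m')⁻¹
              * ((‖g x‖₊ : ℝ≥0∞) ^ (2 : ℕ) * ENNReal.ofReal (w x)) := lintegral_mono_ae hle
        _ = (ENNReal.ofReal m')⁻¹ * ∫⁻ x in closedBall c ρ,
              (‖g x‖₊ : ℝ≥0∞) ^ (2 : ℕ) * ENNReal.ofReal (w x) :=
            lintegral_const_mul' _ _ (ENNReal.inv_ne_top.mpr hne)
        _ ≤ (ENNReal.ofReal m')⁻¹ * ∫⁻ x, (‖g x‖₊ : ℝ≥0∞) ^ (2 : ℕ) * ENNReal.ofReal (w x) :=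
            mul_le_mul_right (setLIntegral_le_lintegral _ _) _
        _ < ∞ := ENNReal.mul_lt_top (ENNReal.inv_lt_top.mpr (ofReal_pos.mpr hm')) hf2
    refine ⟨hg_sm.aestronglyMeasurable.restrict, ?_⟩
    have hpt : ∀ x, (‖g x‖₊ : ℝ≥0∞) ≤ 1 + (‖g x‖₊ : ℝ≥0∞) ^ (2 : ℕ) := by
      intro x
      rcases le_total ((‖g x‖₊ : ℝ≥0∞)) 1 with h | h
      · exact le_trans h le_self_add
      · calc (‖g x‖₊ : ℝ≥0∞) = (‖g x‖₊ : ℝ≥0∞) * 1 := (mul_one _).symm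
          _ ≤ (‖g x‖₊ : ℝ≥0∞) * (‖g x‖₊ : ℝ≥0∞) := mul_le_mul_right h _
          _ = (‖g x‖₊ : ℝ≥0∞) ^ (2 : ℕ) := (sq _).symm
          _ ≤ 1 + (‖g x‖₊ : ℝ≥0∞) ^ (2 : ℕ) := le_add_self
    show (∫⁻ x in closedBall c ρ, (‖g x‖₊ : ℝ≥0∞)) < ∞
    calc ∫⁻ x in closedBall c ρ, (‖g x‖₊ : ℝ≥0∞)
        ≤ ∫⁻ x in closedBall c ρ, (1 + (‖g x‖₊ : ℝ≥0∞) ^ (2 : ℕ)) := lintegral_mono hpt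
      _ = volume (closedBall c ρ) + ∫⁻ x in closedBall c ρ, (‖g x‖₊ : ℝ≥0∞) ^ (2 : ℕ) := by
          rw [lintegral_add_left measurable_const]
          congr 1
          rw [lintegral_const, Measure.restrict_apply_univ, one_mul]
      _ < ∞ := ENNReal.add_lt_top.mpr ⟨measure_closedBall_lt_top, hb2⟩
  -- measurable version of w
  obtain ⟨w0, hw0m, hww0⟩ := hloc.aestronglyMeasurable
  set w' : EuclideanSpace ℝ (Fin n) → ℝ := fun x => max (w0 x) 0 with hw'def
  have hw'm : Measurable w' := hw0m.measurable.max measurable_const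
  have hww' : w =ᵐ[volume] w' := by
    filter_upwards [hww0] with x hx
    rw [hw'def]
    simp only []
    rw [← hx]
    exact (max_eq_left (hw x)).symm
  -- the measurable kernel
  set F : EuclideanSpace ℝ (Fin n) × ℝ → ℝ≥0∞ :=
    fun p => if 0 < p.2 then intA n α g p.1 p.2 else 0 with hFdef
  have hF : Measurable F := measurable_bigF hn hα0 hα1 hg hgi
  set Φ : EuclideanSpace ℝ (Fin n) × ℝ → ℝ≥0∞ :=
    fun p => F p ^ (2 : ℕ) * (ENNReal.ofReal (p.2 ^ (n + 1)))⁻¹ with hΦdef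
  have hΦ : Measurable Φ :=
    (hF.pow_const 2).mul
      ((ENNReal.measurable_ofReal.comp (measurable_snd.pow_const (n + 1))).inv)
  have hkey : ∀ b : ℝ,
      (∫⁻ x, sFun n α b f x ^ 2 * ENNReal.ofReal (w x))
        = ∫⁻ t in Ioi (0 : ℝ), ∫⁻ y, Φ (y, t)
            * ∫⁻ x in ball y (b * t), ENNReal.ofReal (w' x) := by
    intro b
    rw [← key_swap hΦ hw'm b]
    refine lintegral_congr_ae ?_
    filter_upwards [hww'] with x hx
    rw [hx]
    congr 1
    simp only [sFun]
    rw [enn_sq_half]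
    refine lintegral_congr_ae ?_
    filter_upwards [ae_restrict_mem measurableSet_Ioi] with t ht
    refine lintegral_congr fun y => ?_
    rw [intA_congr hfg α y t, hΦdef]
    simp only []
    rw [hFdef]
    simp only [if_pos (mem_Ioi.mp ht)]
  rw [hkey β, hkey 1]
  calc (∫⁻ t in Ioi (0 : ℝ), ∫⁻ y, Φ (y, t)
        * ∫⁻ x in ball y (β * t), ENNReal.ofReal (w' x))
      ≤ ∫⁻ t in Ioi (0 : ℝ), ∫⁻ y, ENNReal.ofReal (A' * 2 ^ n / V.toReal * β ^ n)
          * (Φ (y, t) * ∫⁻ x in ball y (1 * t), ENNReal.ofReal (w' x)) := by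
        refine lintegral_mono_ae ?_
        filter_upwards [ae_restrict_mem measurableSet_Ioi] with t ht
        refine lintegral_mono fun y => ?_
        have hwcongr : ∀ s : Set (EuclideanSpace ℝ (Fin n)),
            (∫⁻ x in s, ENNReal.ofReal (w' x)) = ∫⁻ x in s, ENNReal.ofReal (w x) :=
          fun s => (lintegral_congr_ae (ae_restrict_of_ae
            (hww'.mono fun x hx => congrArg ENNReal.ofReal hx))).symm
        have hd := doubling hn hw hloc hA' hA'1 hβ (mem_Ioi.mp ht) y
        calc Φ (y, t) * ∫⁻ x in ball y (β * t), ENNReal.ofReal (w' x)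
            ≤ Φ (y, t) * (ENNReal.ofReal (A' * 2 ^ n / V.toReal * β ^ n)
                * ∫⁻ x in ball y (1 * t), ENNReal.ofReal (w' x)) := by
              refine mul_le_mul_right ?_ _
              rw [hwcongr, one_mul, hwcongr]
              exact hd
          _ = ENNReal.ofReal (A' * 2 ^ n / V.toReal * β ^ n)
                * (Φ (y, t) * ∫⁻ x in ball y (1 * t), ENNReal.ofReal (w' x)) := by ring
    _ = ENNReal.ofReal (A' * 2 ^ n / V.toReal * β ^ n)
          * ∫⁻ t in Ioi (0 : ℝ), ∫⁻ y, Φ (y, t)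
              * ∫⁻ x in ball y (1 * t), ENNReal.ofReal (w' x) := by
        rw [← lintegral_const_mul' _ _ ofReal_ne_top]
        refine lintegral_congr fun t => ?_
        rw [← lintegral_const_mul' _ _ ofReal_ne_top]
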